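/- Every complete bipartite graph K_{a,b} satisfies Sidorenko's conjecture: for all positive integers a, b and every graph G, t_{K_{a,b}}(G) ≥ t_{K₂}(G)^{ab}. -/

import Mathlib

open Finset

noncomputable def homCount {α β : Type*} (H : SimpleGraph α) (G : SimpleGraph β) : ℕ :=
  Nat.card {f : α → β // ∀ ⦃a b⦄, H.Adj a b → G.Adj (f a) (f b)}

noncomputable def homDensity {α β : Type*} (H : SimpleGraph α) (G : SimpleGraph β) : ℝ :=
  (homCount H G : ℝ) / (Nat.card β : ℝ) ^ (Nat.card α)

lemma natCard_sigma {ι : Type*} [Fintype ι] {f : ι → Type*} [∀ i, Finite (f i)] :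
    Nat.card ((i : ι) × f i) = ∑ i, Nat.card (f i) := by
  letI : ∀ i, Fintype (f i) := fun i => Fintype.ofFinite _
  simp [Nat.card_eq_fintype_card]

lemma natCard_pi_const {ι β : Type*} [Fintype ι] (p : β → Prop) :
    Nat.card {u : ι → β // ∀ i, p (u i)} = Nat.card {x : β // p x} ^ Fintype.card ι := by
  rw [Nat.card_congr (Equiv.subtypePiEquivPi (p := fun _ => p)), Nat.card_pi,
    Finset.prod_const, Finset.card_univ]

lemma homCount_K2 {β : Type*} [Fintype β] (G : SimpleGraph β) :
    homCount (SimpleGraph.completeGraph (Fin 2)) G = ∑ x : β, Nat.card {y : β // G.Adj x y} := by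
  rw [homCount]
  have e1 : {f : Fin 2 → β // ∀ ⦃a b⦄, (SimpleGraph.completeGraph (Fin 2)).Adj a b → G.Adj (f a) (f b)}
      ≃ {p : β × β // G.Adj p.1 p.2} := by
    refine (piFinTwoEquiv fun _ => β).subtypeEquiv fun f => ?_
    constructor
    · intro h
      exact h (by simp [SimpleGraph.completeGraph] : (SimpleGraph.completeGraph (Fin 2)).Adj 0 1)
    · intro h i j hij
      fin_cases i <;> fin_cases j <;> simp_all [SimpleGraph.completeGraph] <;> exact h.symm
  rw [Nat.card_congr e1,
    Nat.card_congr (Equiv.subtypeProdEquivSigmaSubtype fun x y => G.Adj x y), natCard_sigma]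

lemma homCount_Kab {β : Type*} [Fintype β] (G : SimpleGraph β) (a b : ℕ) :
    homCount (completeBipartiteGraph (Fin a) (Fin b)) G
      = ∑ u : Fin a → β, Nat.card {y : β // ∀ i, G.Adj (u i) y} ^ b := by
  rw [homCount]
  have e1 : {f : Fin a ⊕ Fin b → β //
        ∀ ⦃x y⦄, (completeBipartiteGraph (Fin a) (Fin b)).Adj x y → G.Adj (f x) (f y)}
      ≃ {p : (Fin a → β) × (Fin b → β) // ∀ i j, G.Adj (p.1 i) (p.2 j)} := by
    refine (Equiv.sumArrowEquivProdArrow _ _ _).subtypeEquiv fun f => ?_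
    constructor
    · intro h i j
      exact h (by simp)
    · intro h x y hxy
      rcases x with i | j <;> rcases y with i' | j' <;> simp_all
      exact (h i' j).symm
  rw [Nat.card_congr e1,
    Nat.card_congr (Equiv.subtypeProdEquivSigmaSubtype
      fun (u : Fin a → β) (v : Fin b → β) => ∀ i j, G.Adj (u i) (v j)), natCard_sigma]
  refine Finset.sum_congr rfl fun u _ => ?_
  have e2 : {v : Fin b → β // ∀ i j, G.Adj (u i) (v j)}
      ≃ {v : Fin b → β // ∀ j, (∀ i, G.Adj (u i) (v j))} :=
    Equiv.subtypeEquiv (Equiv.refl _) fun v => forall_comm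
  rw [Nat.card_congr e2, natCard_pi_const (fun y => ∀ i, G.Adj (u i) y), Fintype.card_fin]

lemma doubleCount {β : Type*} [Fintype β] (G : SimpleGraph β) (a : ℕ) :
    ∑ u : Fin a → β, Nat.card {y : β // ∀ i, G.Adj (u i) y}
      = ∑ x : β, Nat.card {y : β // G.Adj x y} ^ a := by
  have h1 : Nat.card {p : (Fin a → β) × β // ∀ i, G.Adj (p.1 i) p.2}
      = ∑ u : Fin a → β, Nat.card {y : β // ∀ i, G.Adj (u i) y} := by
    rw [Nat.card_congr (Equiv.subtypeProdEquivSigmaSubtype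
      fun (u : Fin a → β) (y : β) => ∀ i, G.Adj (u i) y), natCard_sigma]
  have h2 : Nat.card {p : (Fin a → β) × β // ∀ i, G.Adj (p.1 i) p.2}
      = ∑ x : β, Nat.card {y : β // G.Adj x y} ^ a := by
    have e : {p : (Fin a → β) × β // ∀ i, G.Adj (p.1 i) p.2}
        ≃ {p : β × (Fin a → β) // ∀ i, G.Adj (p.2 i) p.1} :=
      (Equiv.prodComm _ _).subtypeEquiv fun p => Iff.rfl
    rw [Nat.card_congr e,
      Nat.card_congr (Equiv.subtypeProdEquivSigmaSubtype
        fun (x : β) (u : Fin a → β) => ∀ i, G.Adj (u i) x), natCard_sigma]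
    refine Finset.sum_congr rfl fun x _ => ?_
    have e2 : {u : Fin a → β // ∀ i, G.Adj (u i) x}
        ≃ {u : Fin a → β // ∀ i, G.Adj x (u i)} :=
      Equiv.subtypeEquiv (Equiv.refl _) fun u => by simp [SimpleGraph.adj_comm]
    rw [Nat.card_congr e2, natCard_pi_const (fun y => G.Adj x y), Fintype.card_fin]
  rw [← h1, h2]

/-- Sidorenko's conjecture for complete bipartite graphs:
`t_{K_{a,b}}(G) ≥ t_{K₂}(G)^{ab}` for all positive integers `a, b` and every graph `G`. -/
theorem sidorenko_completeBipartite {β : Type*} [Fintype β] (G : SimpleGraph β)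
    (a b : ℕ) (ha : 0 < a) (hb : 0 < b) :
    homDensity (completeBipartiteGraph (Fin a) (Fin b)) G ≥
      homDensity (SimpleGraph.completeGraph (Fin 2)) G ^ (a * b) := by
  classical
  obtain ⟨a', rfl⟩ : ∃ a', a = a' + 1 := ⟨a - 1, (Nat.succ_pred_eq_of_pos ha).symm⟩
  obtain ⟨b', rfl⟩ : ∃ b', b = b' + 1 := ⟨b - 1, (Nat.succ_pred_eq_of_pos hb).symm⟩
  set a := a' + 1 with ha'
  set b := b' + 1 with hb'
  have hcardβ : Nat.card β = Fintype.card β := Nat.card_eq_fintype_card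
  by_cases hne : Fintype.card β = 0
  · have hRHS : homDensity (SimpleGraph.completeGraph (Fin 2)) G = 0 := by
      simp [homDensity, Nat.card_eq_fintype_card, hne]
    rw [hRHS, zero_pow (by positivity)]
    rw [homDensity]
    positivity
  set n : ℝ := (Fintype.card β : ℝ) with hn
  have hn0 : (0:ℝ) < n := by
    rw [hn]; exact_mod_cast Nat.pos_of_ne_zero hne
  set d : β → ℝ := fun x => (Nat.card {y : β // G.Adj x y} : ℝ) with hd
  set M : (Fin a → β) → ℝ := fun u => (Nat.card {y : β // ∀ i, G.Adj (u i) y} : ℝ) with hM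
  have hd0 : ∀ x, 0 ≤ d x := fun x => Nat.cast_nonneg _
  have hM0 : ∀ u, 0 ≤ M u := fun u => Nat.cast_nonneg _
  set D : ℝ := ∑ x, d x with hD
  have hD0 : 0 ≤ D := Finset.sum_nonneg fun x _ => hd0 x
  set T : ℝ := ∑ u : Fin a → β, M u ^ b with hT
  have hK2 : homDensity (SimpleGraph.completeGraph (Fin 2)) G = D / n ^ 2 := by
    rw [homDensity, homCount_K2, hcardβ]
    simp only [Nat.card_eq_fintype_card, Fintype.card_fin]
    rw [hD, hn]
    push_cast
    simp [hd]
  have hKab : homDensity (completeBipartiteGraph (Fin a) (Fin b)) G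
      = T / n ^ (a + b) := by
    rw [homDensity, homCount_Kab, hcardβ]
    simp only [Nat.card_eq_fintype_card, Fintype.card_sum, Fintype.card_fin]
    rw [hT, hn]
    push_cast
    simp [hM]
  have hJ1 : (∑ u : Fin a → β, M u) ^ b / n ^ (a * b') ≤ T := by
    have := pow_sum_div_card_le_sum_pow (s := (univ : Finset (Fin a → β))) (f := M)
      (fun u _ => hM0 u) b'
    simpa [hT, hn, Fintype.card_fun, pow_mul, hb'] using this
  have hJ2 : D ^ a / n ^ a' ≤ ∑ x, d x ^ a := by
    have := pow_sum_div_card_le_sum_pow (s := (univ : Finset β)) (f := d)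
      (fun x _ => hd0 x) a'
    simpa [← hD, hn, ha'] using this
  have hDC : (∑ u : Fin a → β, M u) = ∑ x, d x ^ a := by
    have h := congrArg (Nat.cast (R := ℝ)) (doubleCount G a)
    push_cast at h
    simpa [hM, hd] using h
  have h2 : D ^ a ≤ (∑ x, d x ^ a) * n ^ a' := by
    rw [← div_le_iff₀ (by positivity)]
    exact hJ2
  have h3 : (∑ x, d x ^ a) ^ b ≤ T * n ^ (a * b') := by
    rw [← hDC, ← div_le_iff₀ (by positivity)]
    exact hJ1
  have key : D ^ (a * b) ≤ T * n ^ (a * b' + a' * b) := by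
    calc D ^ (a * b) = (D ^ a) ^ b := by rw [pow_mul]
      _ ≤ ((∑ x, d x ^ a) * n ^ a') ^ b := pow_le_pow_left₀ (by positivity) h2 b
      _ = (∑ x, d x ^ a) ^ b * n ^ (a' * b) := by rw [mul_pow, ← pow_mul]
      _ ≤ T * n ^ (a * b') * n ^ (a' * b) :=
          mul_le_mul_of_nonneg_right h3 (by positivity)
      _ = T * n ^ (a * b' + a' * b) := by rw [pow_add]; ring
  have hexp : 2 * (a * b) = (a * b' + a' * b) + (a + b) := by
    rw [ha', hb']; ring
  rw [hK2, hKab, div_pow, ← pow_mul, ge_iff_le,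
    div_le_div_iff₀ (by positivity) (by positivity)]
  calc D ^ (a * b) * n ^ (a + b)
      ≤ (T * n ^ (a * b' + a' * b)) * n ^ (a + b) :=
        mul_le_mul_of_nonneg_right key (by positivity)
    _ = T * n ^ (2 * (a * b)) := by rw [hexp, pow_add]; ring
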